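/- Let p be a prime and let G be a group possessing a normal subgroup H such that H is a free group and the index [G : H] is a power of p. Then G is residually p-finite. -/

import Mathlib

/-- A group `G` is residually `p`-finite if every non-trivial element is detected by a
homomorphism to a finite `p`-group. -/
def ResiduallyPFinite (p : ℕ) (G : Type*) [Group G] : Prop :=
  ∀ g : G, g ≠ 1 → ∃ (Q : Type) (_ : Group Q) (_ : Fintype Q) (φ : G →* Q),
    IsPGroup p Q ∧ φ g ≠ 1



open Classical in
noncomputable section

namespace RPAux

variable {R : Type} [CommRing R] {s : ℕ}

/-- strictly upper triangular -/
def su (A : Matrix (Fin s) (Fin s) R) : Prop := ∀ i j : Fin s, (j : ℕ) ≤ (i : ℕ) → A i j = 0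

/-- upper triangular (weak) -/
def ut (A : Matrix (Fin s) (Fin s) R) : Prop := ∀ i j : Fin s, (j : ℕ) < (i : ℕ) → A i j = 0

lemma ut_one : ut (1 : Matrix (Fin s) (Fin s) R) := by
  intro i j h
  exact Matrix.one_apply_ne (by rintro rfl; omega)

lemma su_zero : su (0 : Matrix (Fin s) (Fin s) R) := fun _ _ _ => rfl

lemma su_ut {A : Matrix (Fin s) (Fin s) R} (h : su A) : ut A :=
  fun i j hij => h i j hij.le

lemma su_add {A B : Matrix (Fin s) (Fin s) R} (hA : su A) (hB : su B) : su (A + B) := by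
  intro i j h; simp [Matrix.add_apply, hA i j h, hB i j h]

lemma su_neg {A : Matrix (Fin s) (Fin s) R} (hA : su A) : su (-A) := by
  intro i j h; simp [hA i j h]

lemma su_mul_ut {A B : Matrix (Fin s) (Fin s) R} (hA : su A) (hB : ut B) : su (A * B) := by
  intro i j h
  rw [Matrix.mul_apply]
  apply Finset.sum_eq_zero
  intro t _
  rcases le_or_gt (t : ℕ) (i : ℕ) with ht | ht
  · simp [hA i t ht]
  · simp [hB t j (by omega)]

lemma ut_mul {A B : Matrix (Fin s) (Fin s) R} (hA : ut A) (hB : ut B) : ut (A * B) := by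
  intro i j h
  rw [Matrix.mul_apply]
  apply Finset.sum_eq_zero
  intro t _
  rcases le_or_gt (i : ℕ) (t : ℕ) with ht | ht
  · simp [hB t j (by omega)]
  · simp [hA i t ht]

lemma ut_pow {A : Matrix (Fin s) (Fin s) R} (hA : ut A) (n : ℕ) : ut (A ^ n) := by
  induction n with
  | zero => simpa using ut_one
  | succ n ih => rw [pow_succ]; exact ut_mul ih hA

lemma su_pow_entry {A : Matrix (Fin s) (Fin s) R} (hA : su A) (r : ℕ) :
    ∀ i j : Fin s, (j : ℕ) < (i : ℕ) + r → (A ^ r) i j = 0 := by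
  induction r with
  | zero =>
    intro i j h
    rw [pow_zero]
    exact Matrix.one_apply_ne (by rintro rfl; omega)
  | succ r ih =>
    intro i j h
    rw [pow_succ, Matrix.mul_apply]
    apply Finset.sum_eq_zero
    intro t _
    rcases lt_or_ge (t : ℕ) ((i : ℕ) + r) with ht | ht
    · simp [ih i t ht]
    · simp [hA t j (by omega)]

lemma su_pow_eq_zero {A : Matrix (Fin s) (Fin s) R} (hA : su A) {n : ℕ} (hn : s ≤ n) :
    A ^ n = 0 := by
  ext i j
  have := su_pow_entry hA n i j (by omega)
  simpa using this

/-- The unitriangular subgroup of the units of the matrix ring. -/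
def UT (R : Type) [CommRing R] (s : ℕ) : Subgroup (Matrix (Fin s) (Fin s) R)ˣ where
  carrier := {u | su ((u : Matrix (Fin s) (Fin s) R) - 1)}
  one_mem' := by simpa using su_zero
  mul_mem' := by
    intro u v hu hv
    have h : ((u * v : (Matrix (Fin s) (Fin s) R)ˣ) : Matrix (Fin s) (Fin s) R) - 1 =
        (((u : Matrix (Fin s) (Fin s) R)) - 1) + (((v : Matrix (Fin s) (Fin s) R)) - 1)
          + (((u : Matrix (Fin s) (Fin s) R)) - 1) * (((v : Matrix (Fin s) (Fin s) R)) - 1) := by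
      push_cast
      noncomm_ring
    rw [Set.mem_setOf_eq, h]
    exact su_add (su_add hu hv) (su_mul_ut hu (su_ut hv))
  inv_mem' := by
    intro u hu
    simp only [Set.mem_setOf_eq] at hu ⊢
    set A : Matrix (Fin s) (Fin s) R := (u : Matrix (Fin s) (Fin s) R) - 1 with hA
    set B : Matrix (Fin s) (Fin s) R := ∑ t ∈ Finset.range s, (-A) ^ t with hB
    have h1 : (-A) - 1 = -(u : Matrix (Fin s) (Fin s) R) := by rw [hA]; abel
    have hgeom : B * (u : Matrix (Fin s) (Fin s) R) = 1 := by
      have h := geom_sum_mul (-A) s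
      rw [su_pow_eq_zero (su_neg hu) le_rfl, h1, ← hB] at h
      rw [mul_neg] at h
      have := congrArg Neg.neg h
      simpa using this
    have hinv : ((u⁻¹ : (Matrix (Fin s) (Fin s) R)ˣ) : Matrix (Fin s) (Fin s) R) = B := by
      calc ((u⁻¹ : (Matrix (Fin s) (Fin s) R)ˣ) : Matrix (Fin s) (Fin s) R)
          = 1 * ((u⁻¹ : (Matrix (Fin s) (Fin s) R)ˣ) : Matrix (Fin s) (Fin s) R) := by
            rw [one_mul]
        _ = B * ((u : Matrix (Fin s) (Fin s) R) *
              ((u⁻¹ : (Matrix (Fin s) (Fin s) R)ˣ) : Matrix (Fin s) (Fin s) R)) := by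
            rw [← mul_assoc, hgeom]
        _ = B := by rw [Units.mul_inv, mul_one]
    rw [hinv]
    cases s with
    | zero => intro i j; exact absurd i.2 (by omega)
    | succ n =>
      have hBsplit : B - 1 = ∑ t ∈ Finset.range n, (-A) ^ (t + 1) := by
        rw [hB, Finset.sum_range_succ']
        simp
      rw [hBsplit]
      apply Finset.sum_induction _ su (fun a b => su_add) su_zero
      intro t _
      rw [pow_succ']
      exact su_mul_ut (su_neg hu) (ut_pow (su_ut (su_neg hu)) t)


lemma mem_UT {R : Type} [CommRing R] {s : ℕ} (u : (Matrix (Fin s) (Fin s) R)ˣ) :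
    u ∈ UT R s ↔ su ((u : Matrix (Fin s) (Fin s) R) - 1) := Iff.rfl



lemma pow_dvd_choose {p : ℕ} (hp : p.Prime) (m s i : ℕ) (hi1 : 1 ≤ i) (his : i < s) :
    p ^ m ∣ (p ^ (m + s)).choose i := by
  set K := m + s with hK
  have hpK : 1 ≤ p ^ K := Nat.one_le_two_pow.trans (Nat.pow_le_pow_left hp.two_le K)
  -- identity : p^K * choose (p^K - 1) (i - 1) = choose (p^K) i * i
  have hid : p ^ K * Nat.choose (p ^ K - 1) (i - 1) = Nat.choose (p ^ K) i * i := by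
    have := Nat.add_one_mul_choose_eq (p ^ K - 1) (i - 1)
    rw [Nat.sub_add_cancel hpK,
      Nat.sub_add_cancel hi1] at this
    exact this
  have hdvd : p ^ K ∣ Nat.choose (p ^ K) i * i := ⟨_, hid.symm⟩
  set a := i.factorization p with ha
  have hpa : p ^ a ∣ i := Nat.ordProj_dvd i p
  have hine : i ≠ 0 := by omega
  have hu : ¬ p ∣ i / p ^ a := Nat.not_dvd_ordCompl hp hine
  have hieq : i = p ^ a * (i / p ^ a) := (Nat.mul_div_cancel' hpa).symm
  have has : a < s := by
    have h1 : a < p ^ a := Nat.lt_pow_self hp.one_lt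
    have h2 : p ^ a ≤ i := Nat.le_of_dvd (by omega) hpa
    omega
  -- p ^ (m + a) ∣ choose * (i/p^a) * p^a
  have hdvd2 : p ^ (m + a) * p ^ (s - a) ∣ (Nat.choose (p ^ K) i * (i / p ^ a)) * p ^ a := by
    rw [← pow_add]
    have : m + a + (s - a) = K := by omega
    rw [this]
    have : Nat.choose (p ^ K) i * (i / p ^ a) * p ^ a = Nat.choose (p ^ K) i * i := by
      rw [mul_assoc, mul_comm (i / p ^ a), ← hieq]
    rw [this]
    exact hdvd
  have hdvd3 : p ^ m * p ^ a ∣ (Nat.choose (p ^ K) i * (i / p ^ a)) * p ^ a := by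
    refine dvd_trans ?_ hdvd2
    rw [← pow_add]
    exact dvd_mul_of_dvd_left (pow_dvd_pow p (by omega)) _
  have hdvd4 : p ^ m ∣ Nat.choose (p ^ K) i * (i / p ^ a) := by
    have hpa0 : 0 < p ^ a := pow_pos hp.pos a
    exact (Nat.mul_dvd_mul_iff_right hpa0).mp hdvd3
  have hcop : Nat.Coprime (p ^ m) (i / p ^ a) :=
    Nat.Coprime.pow_left m ((Nat.Prime.coprime_iff_not_dvd hp).mpr hu)
  exact hcop.dvd_of_dvd_mul_right hdvd4



theorem isPGroup_UT (p m : ℕ) (hp : p.Prime) (s : ℕ) :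
    IsPGroup p ↥(UT (ZMod (p ^ m)) s) := by
  intro g
  refine ⟨m + s, ?_⟩
  have hmem : su ((g : (Matrix (Fin s) (Fin s) (ZMod (p ^ m)))ˣ).val - 1) :=
    (mem_UT _).mp g.2
  set A : Matrix (Fin s) (Fin s) (ZMod (p ^ m)) :=
    ((g : (Matrix (Fin s) (Fin s) (ZMod (p ^ m)))ˣ) : Matrix (Fin s) (Fin s) (ZMod (p ^ m))) - 1
    with hA
  have key : ((g : (Matrix (Fin s) (Fin s) (ZMod (p ^ m)))ˣ) :
      Matrix (Fin s) (Fin s) (ZMod (p ^ m))) ^ (p ^ (m + s)) = 1 := by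
    have hval : ((g : (Matrix (Fin s) (Fin s) (ZMod (p ^ m)))ˣ) :
        Matrix (Fin s) (Fin s) (ZMod (p ^ m))) = A + 1 := by rw [hA]; abel
    rw [hval, (Commute.one_right A).add_pow]
    rw [Finset.sum_eq_single 0]
    · simp
    · intro t _ ht0
      rcases le_or_gt s t with hst | hst
      · rw [su_pow_eq_zero hmem hst]
        simp
      · have : ((p ^ (m + s)).choose t : ZMod (p ^ m)) = 0 := by
          rw [ZMod.natCast_eq_zero_iff]
          exact pow_dvd_choose hp m s t (by omega) hst
        have h0 : (((p ^ (m + s)).choose t : ℕ) :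
            Matrix (Fin s) (Fin s) (ZMod (p ^ m))) = 0 := by
          rw [← map_natCast (algebraMap (ZMod (p ^ m)) (Matrix (Fin s) (Fin s) (ZMod (p ^ m)))),
            this, map_zero]
        rw [h0, mul_zero]
    · intro h
      simp at h
  have h2 : ((g : (Matrix (Fin s) (Fin s) (ZMod (p ^ m)))ˣ) ^ (p ^ (m + s))) = 1 :=
    Units.ext (by rw [Units.val_pow_eq_pow_val]; exact key.trans Units.val_one.symm)
  exact Subtype.ext (by rw [SubgroupClass.coe_pow]; exact h2.trans rfl)


section Words

variable {ι : Type*} [DecidableEq ι]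

def sgn (b : Bool) (n : ℕ) : ℤ := if b then (n : ℤ) else -(n : ℤ)

lemma sgn_ne_zero (b : Bool) {n : ℕ} (hn : 1 ≤ n) : sgn b n ≠ 0 := by
  cases b <;> simp [sgn] <;> omega

lemma sgn_succ (b : Bool) (n : ℕ) : sgn b (n + 1) = sgn b 1 + sgn b n := by
  cases b <;> simp [sgn] <;> push_cast <;> ring

def F : ι × Bool × ℕ → FreeGroup ι := fun x => (FreeGroup.of x.1) ^ (sgn x.2.1 x.2.2)

lemma mk_single (a : ι) (b : Bool) : FreeGroup.mk [(a, b)] = (FreeGroup.of a) ^ (sgn b 1) := by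
  cases b
  · show FreeGroup.mk [(a, false)] = _
    have h1 : FreeGroup.mk [(a, false)] = (FreeGroup.mk [(a, true)])⁻¹ := by
      rw [FreeGroup.inv_mk]
      rfl
    rw [h1]
    show (FreeGroup.of a)⁻¹ = _
    simp [sgn]
  · show FreeGroup.mk [(a, true)] = _
    simp only [sgn, if_pos rfl, Nat.cast_one, zpow_one]
    rfl

lemma mk_cons (a : ι) (b : Bool) (L : List (ι × Bool)) :
    FreeGroup.mk ((a, b) :: L) = (FreeGroup.of a) ^ (sgn b 1) * FreeGroup.mk L := by
  rw [← mk_single, FreeGroup.mul_mk]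
  rfl

def push (x : ι × Bool) : List (ι × Bool × ℕ) → List (ι × Bool × ℕ)
  | [] => [(x.1, x.2, 1)]
  | y :: S =>
    if x.1 = y.1 ∧ x.2 = y.2.1 then (y.1, y.2.1, y.2.2 + 1) :: S else (x.1, x.2, 1) :: y :: S

def syll : List (ι × Bool) → List (ι × Bool × ℕ)
  | [] => []
  | x :: L => push x (syll L)

lemma push_head (x : ι × Bool) (S : List (ι × Bool × ℕ)) :
    ∃ n S', push x S = (x.1, x.2, n) :: S' := by
  cases S with
  | nil => exact ⟨1, [], rfl⟩
  | cons y S =>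
    by_cases h : x.1 = y.1 ∧ x.2 = y.2.1
    · exact ⟨y.2.2 + 1, S, by simp [push, if_pos h, h.1, h.2]⟩
    · exact ⟨1, y :: S, by simp [push, if_neg h]⟩

lemma syll_prod (L : List (ι × Bool)) : FreeGroup.mk L = ((syll L).map F).prod := by
  induction L with
  | nil => simp [syll, FreeGroup.one_eq_mk]
  | cons x L ih =>
    obtain ⟨a, b⟩ := x
    rw [show syll ((a, b) :: L) = push (a, b) (syll L) from rfl, mk_cons, ih]
    cases h : syll L with
    | nil => simp [push, F]
    | cons y S =>
      by_cases hy : a = y.1 ∧ b = y.2.1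
      · have : push (a, b) (y :: S) = (y.1, y.2.1, y.2.2 + 1) :: S := by
          simp [push, if_pos, hy.1, hy.2]
        rw [this]
        simp only [List.map_cons, List.prod_cons, ← mul_assoc]
        congr 1
        rw [F, F]
        simp only [hy.1, hy.2]
        conv_rhs => rw [sgn_succ]
        rw [zpow_add]
      · have : push (a, b) (y :: S) = ((a, b).1, (a, b).2, 1) :: y :: S := by
          rw [push, if_neg hy]
        rw [this]
        simp [F, mul_assoc]

lemma syll_pos (L : List (ι × Bool)) : ∀ x ∈ syll L, 1 ≤ x.2.2 := by
  induction L with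
  | nil => simp [syll]
  | cons x L ih =>
    rw [show syll (x :: L) = push x (syll L) from rfl]
    cases h : syll L with
    | nil => simp [push]
    | cons y S =>
      by_cases hy : x.1 = y.1 ∧ x.2 = y.2.1
      · rw [push, if_pos hy]
        intro z hz
        rcases List.mem_cons.mp hz with rfl | hz
        · simp
        · exact ih z (h ▸ List.mem_cons_of_mem _ hz)
      · rw [push, if_neg hy]
        intro z hz
        rcases List.mem_cons.mp hz with rfl | hz
        · simp
        · exact ih z (h ▸ hz)

lemma syll_chain (L : List (ι × Bool))
    (hL : L.Chain' (fun x y => x.1 = y.1 → x.2 = y.2)) :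
    (syll L).Chain' (fun x y => x.1 ≠ y.1) := by
  induction L with
  | nil => simp [syll]; exact List.isChain_nil
  | cons x L ih =>
    rw [show syll (x :: L) = push x (syll L) from rfl]
    cases L with
    | nil => simp [syll, push]; exact List.isChain_singleton _
    | cons x₂ L₂ =>
      have hrel : x.1 = x₂.1 → x.2 = x₂.2 := (List.isChain_cons_cons.mp hL).1
      have htail : (x₂ :: L₂).Chain' (fun x y => x.1 = y.1 → x.2 = y.2) :=
        (List.isChain_cons_cons.mp hL).2
      have ih2 := ih htail
      obtain ⟨n, S', hS⟩ := push_head x₂ (syll L₂)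
      rw [show syll (x₂ :: L₂) = push x₂ (syll L₂) from rfl] at ih2 ⊢
      rw [hS] at ih2 ⊢
      by_cases hy : x.1 = x₂.1 ∧ x.2 = x₂.2
      · rw [show push x ((x₂.1, x₂.2, n) :: S') = (x₂.1, x₂.2, n + 1) :: S' from by
          simp [push, hy.1, hy.2]]
        rw [List.Chain', List.isChain_cons] at ih2 ⊢
        exact ⟨ih2.1, ih2.2⟩
      · rw [show push x ((x₂.1, x₂.2, n) :: S') = (x.1, x.2, 1) :: (x₂.1, x₂.2, n) :: S' from by
          rw [push, if_neg hy]]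
        rw [List.Chain', List.isChain_cons_cons]
        refine ⟨?_, ih2⟩
        intro hx1
        exact hy ⟨hx1, hrel hx1⟩


variable {ι : Type*} [DecidableEq ι]

lemma chain'_reduce (L : List (ι × Bool)) :
    (FreeGroup.reduce L).Chain' (fun x y => x.1 = y.1 → x.2 = y.2) := by
  induction L with
  | nil => simp; exact List.isChain_nil
  | cons x L ih =>
    rw [FreeGroup.reduce.cons]
    cases h : FreeGroup.reduce L with
    | nil => simp; exact List.isChain_singleton _
    | cons hd tl =>
      rw [h] at ih
      dsimp only
      split_ifs with hif
      · exact ih.tail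
      · rw [List.Chain', List.isChain_cons_cons]
        refine ⟨?_, ih⟩
        intro h1
        rcases Bool.eq_or_eq_not x.2 hd.2 with h2 | h2
        · exact h2
        · exact absurd ⟨h1, h2⟩ hif


end Words

section Rep
open Classical

variable {ι : Type*}

noncomputable section

def letterAt (S : List (ι × ℤ)) (t : ℕ) : Option ι := (S[t]?).map Prod.fst

def NN (S : List (ι × ℤ)) (R : Type) [CommRing R] (x : ι) :
    Matrix (Fin (S.length + 1)) (Fin (S.length + 1)) R :=
  Matrix.of fun i j =>
    if ((j : ℕ) = (i : ℕ) + 1 ∧ letterAt S (i : ℕ) = some x) then 1 else 0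

variable (S : List (ι × ℤ)) (R : Type) [CommRing R]

lemma letter_adj (hC : S.Chain' (fun a b => a.1 ≠ b.1)) (t : ℕ) (x : ι)
    (h1 : letterAt S t = some x) (h2 : letterAt S (t + 1) = some x) : False := by
  simp only [letterAt, Option.map_eq_some_iff] at h1 h2
  obtain ⟨a, ha, ha1⟩ := h1
  obtain ⟨b, hb, hb1⟩ := h2
  rw [List.getElem?_eq_some_iff] at ha hb
  obtain ⟨hta, ha⟩ := ha
  obtain ⟨htb, hb⟩ := hb
  have := List.isChain_iff_getElem.mp hC t (by omega)
  simp only [ha, hb] at this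
  exact this (ha1.trans hb1.symm)

lemma su_NN (x : ι) : su (NN S R x) := by
  intro i j h
  simp only [NN, Matrix.of_apply]
  rw [if_neg]
  rintro ⟨h1, -⟩
  omega

lemma NN_mul_NN (hC : S.Chain' (fun a b => a.1 ≠ b.1)) (x : ι) :
    NN S R x * NN S R x = 0 := by
  ext i j
  rw [Matrix.mul_apply]
  rw [Matrix.zero_apply]
  apply Finset.sum_eq_zero
  intro t _
  by_cases h1 : ((t : ℕ) = (i : ℕ) + 1 ∧ letterAt S (i : ℕ) = some x)
  · by_cases h2 : ((j : ℕ) = (t : ℕ) + 1 ∧ letterAt S (t : ℕ) = some x)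
    · exact absurd (letter_adj S hC (i : ℕ) x h1.2 (h1.1 ▸ h2.2)) id
    · simp [NN, h2]
  · simp [NN, h1]

lemma lin_mul (hC : S.Chain' (fun a b => a.1 ≠ b.1)) (x : ι) (a b : R) :
    (1 + a • NN S R x) * (1 + b • NN S R x) = 1 + (a + b) • NN S R x := by
  rw [add_mul, one_mul, mul_add, mul_one, smul_mul_assoc, mul_smul_comm,
    NN_mul_NN S R hC x, smul_zero, smul_zero, add_zero, add_smul]
  abel

def uu (hC : S.Chain' (fun a b => a.1 ≠ b.1)) (x : ι) :
    (Matrix (Fin (S.length + 1)) (Fin (S.length + 1)) R)ˣ where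
  val := 1 + NN S R x
  inv := 1 - NN S R x
  val_inv := by
    have h : (1 + NN S R x) * (1 - NN S R x) = 1 - NN S R x * NN S R x := by noncomm_ring
    rw [h, NN_mul_NN S R hC x, sub_zero]
  inv_val := by
    have h : (1 - NN S R x) * (1 + NN S R x) = 1 - NN S R x * NN S R x := by noncomm_ring
    rw [h, NN_mul_NN S R hC x, sub_zero]

lemma uu_mem (hC : S.Chain' (fun a b => a.1 ≠ b.1)) (x : ι) : uu S R hC x ∈ UT R (S.length + 1) := by
  rw [mem_UT]
  show su (1 + NN S R x - 1)
  rw [add_sub_cancel_left]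
  exact su_NN S R x

lemma uu_zpow (hC : S.Chain' (fun a b => a.1 ≠ b.1)) (x : ι) (e : ℤ) :
    ((uu S R hC x ^ e :
      (Matrix (Fin (S.length + 1)) (Fin (S.length + 1)) R)ˣ) :
      Matrix (Fin (S.length + 1)) (Fin (S.length + 1)) R) = 1 + (e : R) • NN S R x := by
  induction e using Int.induction_on with
  | zero => simp
  | succ n ih =>
    rw [zpow_add_one, Units.val_mul, ih]
    have hval : ((uu S R hC x : (Matrix (Fin (S.length + 1)) (Fin (S.length + 1)) R)ˣ) :
        Matrix (Fin (S.length + 1)) (Fin (S.length + 1)) R) = 1 + (1 : R) • NN S R x := by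
      rw [one_smul]; rfl
    rw [hval, lin_mul S R hC]
    push_cast
    ring_nf
  | pred n ih =>
    rw [zpow_sub_one, Units.val_mul, ih]
    have hval : (((uu S R hC x)⁻¹ : (Matrix (Fin (S.length + 1)) (Fin (S.length + 1)) R)ˣ) :
        Matrix (Fin (S.length + 1)) (Fin (S.length + 1)) R) = 1 + (-1 : R) • NN S R x := by
      show (1 - NN S R x) = _
      rw [neg_smul, one_smul, sub_eq_add_neg]
    rw [hval, lin_mul S R hC]
    push_cast
    ring_nf

variable (x₀ : ι)

def bb (t : ℕ) : ι := (S.getD t (x₀, 0)).1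
def ee (t : ℕ) : ℤ := (S.getD t (x₀, 0)).2

def Pm (j : ℕ) : Matrix (Fin (S.length + 1)) (Fin (S.length + 1)) R :=
  ((List.range j).map (fun t => 1 + ((ee S x₀ t : ℤ) : R) • NN S R (bb S x₀ t))).prod

lemma Pm_succ (j : ℕ) :
    Pm S R x₀ (j + 1) = Pm S R x₀ j * (1 + ((ee S x₀ j : ℤ) : R) • NN S R (bb S x₀ j)) := by
  rw [Pm, Pm, List.range_succ, List.map_append, List.prod_append]
  simp

lemma entry (hC : S.Chain' (fun a b => a.1 ≠ b.1)) (j : ℕ) (hj : j ≤ S.length) :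
    (∀ i : Fin (S.length + 1), j < (i : ℕ) → Pm S R x₀ j 0 i = 0) ∧
      Pm S R x₀ j 0 ⟨j, by omega⟩ =
        ((List.range j).map (fun t => ((ee S x₀ t : ℤ) : R))).prod := by
  induction j with
  | zero =>
    have hPm0 : Pm S R x₀ 0 = 1 := by simp [Pm]
    constructor
    · intro i hi
      rw [hPm0]
      exact Matrix.one_apply_ne (by intro h; rw [← h] at hi; simp at hi)
    · rw [hPm0]
      show (1 : Matrix _ _ R) 0 0 = _
      simp [Matrix.one_apply]
  | succ j ih =>
    have IH := ih (by omega)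
    have hsum : ∀ i : Fin (S.length + 1), Pm S R x₀ (j + 1) 0 i =
        Pm S R x₀ j 0 i +
          ∑ t : Fin (S.length + 1),
            (if ((i : ℕ) = (t : ℕ) + 1 ∧ letterAt S (t : ℕ) = some (bb S x₀ j))
              then Pm S R x₀ j 0 t * ((ee S x₀ j : ℤ) : R) else 0) := by
      intro i
      rw [Pm_succ, Matrix.mul_apply]
      have hX : ∀ t : Fin (S.length + 1),
          Pm S R x₀ j 0 t * ((1 + ((ee S x₀ j : ℤ) : R) • NN S R (bb S x₀ j) :
            Matrix (Fin (S.length + 1)) (Fin (S.length + 1)) R)) t i =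
          (if t = i then Pm S R x₀ j 0 t else 0) +
            (if ((i : ℕ) = (t : ℕ) + 1 ∧ letterAt S (t : ℕ) = some (bb S x₀ j))
              then Pm S R x₀ j 0 t * ((ee S x₀ j : ℤ) : R) else 0) := by
        intro t
        simp only [Matrix.add_apply, Matrix.smul_apply, Matrix.one_apply, NN, Matrix.of_apply,
          smul_ite, smul_eq_mul, mul_one, smul_zero, mul_add, mul_ite, mul_zero]
      rw [Finset.sum_congr rfl (fun t _ => hX t), Finset.sum_add_distrib]
      congr 1
      rw [Finset.sum_ite_eq' Finset.univ i (fun t => Pm S R x₀ j 0 t)]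
      simp
    have hlet : letterAt S j = some (bb S x₀ j) := by
      rw [letterAt, List.getElem?_eq_getElem (by omega), bb, List.getD_eq_getElem S _ (by omega)]
      rfl
    constructor
    · intro i hi
      rw [hsum i, IH.1 i (by omega), zero_add]
      apply Finset.sum_eq_zero
      intro t _
      by_cases hcond : ((i : ℕ) = (t : ℕ) + 1 ∧ letterAt S (t : ℕ) = some (bb S x₀ j))
      · rw [if_pos hcond, IH.1 t (by omega), zero_mul]
      · rw [if_neg hcond]
    · rw [hsum ⟨j + 1, by omega⟩, IH.1 ⟨j + 1, by omega⟩ (by simp), zero_add]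
      rw [Finset.sum_eq_single (⟨j, by omega⟩ : Fin (S.length + 1))]
      · rw [if_pos ⟨rfl, hlet⟩, IH.2, List.range_succ, List.map_append, List.prod_append]
        simp
      · intro t _ hne
        rw [if_neg]
        rintro ⟨h1, -⟩
        exact hne (Fin.ext (by simpa using h1.symm))
      · intro habs
        exact absurd (Finset.mem_univ _) habs

end


section Assemble
open Classical
noncomputable section
variable {ι : Type*} (S : List (ι × ℤ)) (R : Type) [CommRing R]

lemma map_eq_range_map {α β : Type*} (S : List α) (d : α) (f : α → β) :
    S.map f = (List.range S.length).map (fun t => f (S.getD t d)) := by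
  apply List.ext_getElem
  · simp
  · intro i h1 h2
    simp only [List.getElem_map, List.getElem_range]
    rw [List.getD_eq_getElem S d (by simpa using h1)]

def ψ (hC : S.Chain' (fun a b => a.1 ≠ b.1)) :
    FreeGroup ι →* ↥(UT R (S.length + 1)) :=
  FreeGroup.lift fun x => (⟨uu S R hC x, uu_mem S R hC x⟩ : ↥(UT R (S.length + 1)))

def vch : ↥(UT R (S.length + 1)) →*
    Matrix (Fin (S.length + 1)) (Fin (S.length + 1)) R :=
  (Units.coeHom _).comp (UT R (S.length + 1)).subtype

lemma val_ψ (hC : S.Chain' (fun a b => a.1 ≠ b.1)) (x₀ : ι) (g : FreeGroup ι)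
    (hg : g = (S.map (fun a : ι × ℤ => FreeGroup.of a.1 ^ a.2)).prod) :
    vch S R (ψ S R hC g) = Pm S R x₀ S.length := by
  have h1 : vch S R (ψ S R hC g) =
      (S.map (fun a : ι × ℤ => vch S R (ψ S R hC (FreeGroup.of a.1 ^ a.2)))).prod := by
    rw [hg, ← MonoidHom.comp_apply, MonoidHom.map_list_prod, List.map_map]
    rfl
  have h2 : ∀ a : ι × ℤ, vch S R (ψ S R hC (FreeGroup.of a.1 ^ a.2)) =
      1 + ((a.2 : ℤ) : R) • NN S R a.1 := by
    intro a
    rw [map_zpow]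
    have h3 : ψ S R hC (FreeGroup.of a.1) = ⟨uu S R hC a.1, uu_mem S R hC a.1⟩ :=
      FreeGroup.lift_apply_of
    rw [h3]
    have h4 : ((⟨uu S R hC a.1, uu_mem S R hC a.1⟩ ^ a.2 : ↥(UT R (S.length + 1))) :
        (Matrix (Fin (S.length + 1)) (Fin (S.length + 1)) R)ˣ) = uu S R hC a.1 ^ a.2 := by
      push_cast
      rfl
    calc vch S R ((⟨uu S R hC a.1, uu_mem S R hC a.1⟩ : ↥(UT R (S.length + 1))) ^ a.2)
        = (((⟨uu S R hC a.1, uu_mem S R hC a.1⟩ ^ a.2 : ↥(UT R (S.length + 1))) :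
            (Matrix (Fin (S.length + 1)) (Fin (S.length + 1)) R)ˣ) :
            Matrix (Fin (S.length + 1)) (Fin (S.length + 1)) R) := rfl
      _ = ((uu S R hC a.1 ^ a.2 : (Matrix (Fin (S.length + 1)) (Fin (S.length + 1)) R)ˣ) :
            Matrix (Fin (S.length + 1)) (Fin (S.length + 1)) R) := by rw [h4]
      _ = 1 + ((a.2 : ℤ) : R) • NN S R a.1 := uu_zpow S R hC a.1 a.2
  rw [h1, Pm]
  rw [map_eq_range_map S (x₀, 0) (fun a : ι × ℤ => vch S R (ψ S R hC (FreeGroup.of a.1 ^ a.2)))]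
  apply congrArg
  apply List.map_congr_left
  intro t _
  rw [h2]
  rfl

theorem exists_hom_freeGroup {p : ℕ} (hp : p.Prime) {ι' : Type*} (g : FreeGroup ι') (hg : g ≠ 1) :
    ∃ (Q : Type) (_ : Group Q) (_ : Fintype Q) (φ : FreeGroup ι' →* Q),
      IsPGroup p Q ∧ φ g ≠ 1 := by
  classical
  set L := g.toWord with hL
  have hne : L ≠ [] := fun h => hg (FreeGroup.toWord_eq_nil_iff.mp h)
  have hredL : FreeGroup.reduce L = L := FreeGroup.reduce_toWord g
  have hchainL : L.Chain' (fun x y => x.1 = y.1 → x.2 = y.2) := by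
    rw [← hredL]; exact chain'_reduce L
  set Sy := syll L with hSy
  set S : List (ι' × ℤ) := Sy.map (fun x => (x.1, sgn x.2.1 x.2.2)) with hS
  have hSyne : Sy ≠ [] := by
    rcases List.exists_cons_of_ne_nil hne with ⟨x, L', hxL⟩
    rw [hSy, hxL, show syll (x :: L') = push x (syll L') from rfl]
    obtain ⟨n, S', h⟩ := push_head x (syll L')
    rw [h]
    exact List.cons_ne_nil _ _
  have hSne : S ≠ [] := by
    rw [hS]; simpa using hSyne
  have hC : S.Chain' (fun a b => a.1 ≠ b.1) := by
    rw [hS, List.Chain', List.isChain_map]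
    exact syll_chain L hchainL
  have hprod : g = (S.map (fun a : ι' × ℤ => FreeGroup.of a.1 ^ a.2)).prod := by
    conv_lhs => rw [← FreeGroup.mk_toWord (x := g)]
    rw [← hL, syll_prod L, hS, List.map_map]
    rfl
  obtain ⟨s0, hs0⟩ := List.exists_cons_of_ne_nil hSne
  obtain ⟨Stl, hStl⟩ := hs0
  set x₀ : ι' := s0.1 with hx₀
  set c : ℤ := (S.map Prod.snd).prod with hc
  have hcne : c ≠ 0 := by
    apply List.prod_ne_zero
    intro h0
    rw [List.mem_map] at h0
    obtain ⟨a, haS, ha0⟩ := h0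
    rw [hS, List.mem_map] at haS
    obtain ⟨y, hy, hya⟩ := haS
    rw [← hya] at ha0
    exact sgn_ne_zero y.2.1 (syll_pos L y hy) ha0
  set m : ℕ := c.natAbs with hm
  have hnd : ¬ ((p : ℤ) ^ m ∣ c) := by
    intro hd
    have h1 : p ^ m ∣ c.natAbs := by
      have := Int.natAbs_dvd_natAbs.mpr hd
      simpa [Int.natAbs_pow] using this
    have h2 := Nat.le_of_dvd (Int.natAbs_pos.mpr hcne) h1
    have h3 : m < p ^ m := lt_of_lt_of_le (Nat.lt_two_pow_self) (Nat.pow_le_pow_left hp.two_le m)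
    omega
  haveI : NeZero (p ^ m) := ⟨pow_ne_zero m hp.pos.ne'⟩
  have hcastc : ((c : ℤ) : ZMod (p ^ m)) ≠ 0 := by
    rw [Ne, ZMod.intCast_zmod_eq_zero_iff_dvd]
    push_cast
    exact hnd
  refine ⟨↥(UT (ZMod (p ^ m)) (S.length + 1)), inferInstance, Fintype.ofFinite _,
    ψ S (ZMod (p ^ m)) hC, isPGroup_UT p m hp (S.length + 1), ?_⟩
  intro h1
  have hv : vch S (ZMod (p ^ m)) (ψ S (ZMod (p ^ m)) hC g) = 1 := by rw [h1, map_one]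
  rw [val_ψ S (ZMod (p ^ m)) hC x₀ g hprod] at hv
  have hlen : 1 ≤ S.length := by
    rw [hStl]; simp
  have hentry := (entry S (ZMod (p ^ m)) x₀ hC S.length le_rfl).2
  rw [hv] at hentry
  have hone : (1 : Matrix (Fin (S.length + 1)) (Fin (S.length + 1)) (ZMod (p ^ m))) 0
      ⟨S.length, by omega⟩ = 0 := by
    apply Matrix.one_apply_ne
    intro h
    have := congrArg Fin.val h
    simp at this
    omega
  rw [hone] at hentry
  -- now : 0 = prod of casts = cast c
  have hcast2 : ((List.range S.length).map
      (fun t => ((ee S x₀ t : ℤ) : ZMod (p ^ m)))).prod = ((c : ℤ) : ZMod (p ^ m)) := by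
    rw [hc]
    rw [show ((((S.map Prod.snd).prod : ℤ)) : ZMod (p ^ m)) =
        ((S.map Prod.snd).map (fun z : ℤ => (z : ZMod (p ^ m)))).prod from
      (map_list_prod (Int.castRingHom (ZMod (p ^ m))).toMonoidHom _).trans rfl]
    rw [List.map_map]
    rw [show ((fun z : ℤ => (z : ZMod (p ^ m))) ∘ Prod.snd) =
      (fun a : ι' × ℤ => ((a.2 : ℤ) : ZMod (p ^ m))) from rfl]
    rw [map_eq_range_map S (x₀, 0) (fun a : ι' × ℤ => ((a.2 : ℤ) : ZMod (p ^ m)))]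
    rfl
  rw [hcast2] at hentry
  exact hcastc hentry.symm

end
end Assemble

end Rep



/-- Shrink a finite detecting quotient to `Type 0`. -/
lemma exists_shrink {p : ℕ} {G : Type*} [Group G] {Q : Type*} [Group Q] [Fintype Q]
    (hQ : IsPGroup p Q) (φ : G →* Q) {g : G} (h : φ g ≠ 1) :
    ∃ (Q' : Type) (_ : Group Q') (_ : Fintype Q') (φ' : G →* Q'),
      IsPGroup p Q' ∧ φ' g ≠ 1 := by
  classical
  haveI : Small.{0} Q := small_of_injective (Fintype.equivFin Q).injective
  let me : Shrink.{0} Q ≃* Q := Shrink.mulEquiv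
  refine ⟨Shrink.{0} Q, inferInstance, Fintype.ofEquiv Q (equivShrink Q),
    me.symm.toMonoidHom.comp φ, IsPGroup.of_equiv hQ me.symm, ?_⟩
  intro h1
  apply h
  have := congrArg me h1
  simpa using this

lemma resP_of_mulEquiv {p : ℕ} {G H : Type*} [Group G] [Group H] (e : G ≃* H)
    (h : ResiduallyPFinite p G) : ResiduallyPFinite p H := by
  intro g hg
  obtain ⟨Q, i1, i2, φ, hQ, hφ⟩ := h (e.symm g) (by
    intro h1
    apply hg
    have := congrArg e h1
    simpa using this)
  exact ⟨Q, i1, i2, φ.comp e.symm.toMonoidHom, hQ, hφ⟩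

lemma resP_free {p : ℕ} (hp : p.Prime) (ι : Type*) : ResiduallyPFinite p (FreeGroup ι) :=
  fun g hg => exists_hom_freeGroup hp g hg

lemma resP_isFreeGroup {p : ℕ} (hp : p.Prime) (H : Type*) [Group H] [IsFreeGroup H] :
    ResiduallyPFinite p H :=
  resP_of_mulEquiv (IsFreeGroup.toFreeGroup H).symm (resP_free hp (IsFreeGroup.Generators H))

section Wreath

variable {G : Type*} [Group G] (H : Subgroup G) [H.Normal]

open QuotientGroup

/-- The translation action of `Q` on `Q → P`. -/
noncomputable def permAction (Q : Type*) [Group Q] (P : Type*) [Group P] :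
    Q →* MulAut (Q → P) :=
  MonoidHom.mk' (fun q =>
    { toFun := fun f r => f (q⁻¹ * r)
      invFun := fun f r => f (q * r)
      left_inv := fun f => funext fun r =>
        show f (q⁻¹ * (q * r)) = f r by rw [inv_mul_cancel_left]
      right_inv := fun f => funext fun r =>
        show f (q * (q⁻¹ * r)) = f r by rw [mul_inv_cancel_left]
      map_mul' := fun f g => rfl })
    (by
      intro q₁ q₂
      apply MulEquiv.ext
      intro f
      funext r
      show f ((q₁ * q₂)⁻¹ * r) = f (q₂⁻¹ * (q₁⁻¹ * r))
      rw [mul_inv_rev, mul_assoc])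

theorem wreath_step {p : ℕ} (hp : p.Prime) (hindex : ∃ n : ℕ, H.index = p ^ n)
    (hres : ResiduallyPFinite p H) {g : G} (hg : g ≠ 1) (hmem : g ∈ H) :
    ∃ (Q : Type) (_ : Group Q) (_ : Fintype Q) (φ : G →* Q),
      IsPGroup p Q ∧ φ g ≠ 1 := by
  classical
  haveI : Fact p.Prime := ⟨hp⟩
  obtain ⟨n, hidx⟩ := hindex
  haveI fQ : Fintype (G ⧸ H) := H.fintypeOfIndexNeZero (by
    rw [hidx]; exact pow_ne_zero n hp.pos.ne')
  obtain ⟨P, iP1, iP2, φ₀, hP, hφ₀⟩ := hres ⟨g, hmem⟩ (by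
    intro h1
    exact hg (by simpa using congrArg Subtype.val h1))
  set Q := G ⧸ H with hQdef
  set π : G →* Q := QuotientGroup.mk' H with hπ
  set t : Q → G := fun q => if q = 1 then 1 else Quotient.out q with ht
  have hπt : ∀ q : Q, π (t q) = q := by
    intro q
    by_cases hq : q = 1
    · simp [ht, hq, hπ]
    · simp only [ht, if_neg hq, hπ, QuotientGroup.mk'_apply]
      exact Quotient.out_eq' q
  have ht1 : t 1 = 1 := by simp [ht]
  have hmemH : ∀ (x : G) (q : Q), (t q)⁻¹ * x * t ((π x)⁻¹ * q) ∈ H := by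
    intro x q
    rw [← QuotientGroup.eq_one_iff]
    show π _ = 1
    rw [map_mul, map_mul, map_inv, hπt, hπt]
    group
  set A : Q →* MulAut (Q → P) := permAction Q P with hA
  set fc : G → (Q → P) := fun x q => φ₀ ⟨(t q)⁻¹ * x * t ((π x)⁻¹ * q), hmemH x q⟩ with hfc
  have hmul : ∀ x y : G,
      (⟨fc (x * y), π (x * y)⟩ : SemidirectProduct (Q → P) Q A) = ⟨fc x, π x⟩ * ⟨fc y, π y⟩ := by
    intro x y
    refine SemidirectProduct.ext ?_ ?_
    · show fc (x * y) = fc x * (A (π x)) (fc y)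
      funext q
      show fc (x * y) q = fc x q * fc y ((π x)⁻¹ * q)
      rw [hfc]
      dsimp only
      rw [← map_mul]
      congr 1
      apply Subtype.ext
      show (t q)⁻¹ * (x * y) * t ((π (x * y))⁻¹ * q) =
        ((t q)⁻¹ * x * t ((π x)⁻¹ * q)) * ((t ((π x)⁻¹ * q))⁻¹ * y * t ((π y)⁻¹ * ((π x)⁻¹ * q)))
      rw [map_mul, mul_inv_rev]
      group
    · show π (x * y) = π x * π y
      rw [map_mul]
  set ψW : G →* SemidirectProduct (Q → P) Q A := MonoidHom.mk' (fun x => ⟨fc x, π x⟩) hmul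
    with hψW
  have eqv : ((Q → P) × Q) ≃ SemidirectProduct (Q → P) Q A :=
    { toFun := fun x => ⟨x.1, x.2⟩
      invFun := fun w => (w.left, w.right)
      left_inv := fun x => rfl
      right_inv := fun w => rfl }
  haveI : Fintype (SemidirectProduct (Q → P) Q A) := Fintype.ofEquiv _ eqv
  have hcard : IsPGroup p (SemidirectProduct (Q → P) Q A) := by
    obtain ⟨a, ha⟩ := (IsPGroup.iff_card (p := p) (G := P)).mp hP
    apply IsPGroup.of_card (n := a * Nat.card Q + n)
    rw [← Nat.card_congr eqv, Nat.card_prod, Nat.card_fun, ha]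
    have hq : Nat.card Q = p ^ n := by rw [← hidx, Subgroup.index_eq_card]
    rw [hq, ← pow_mul, ← pow_add]
  refine exists_shrink hcard ψW ?_
  intro h1
  have hleft : fc g = 1 := congrArg SemidirectProduct.left h1
  have hval : fc g 1 = 1 := congrFun hleft 1
  apply hφ₀
  rw [← hval, hfc]
  dsimp only
  congr 1
  apply Subtype.ext
  show g = (t 1)⁻¹ * g * t ((π g)⁻¹ * 1)
  have hπg : π g = 1 := (QuotientGroup.eq_one_iff g).mpr hmem
  rw [hπg, inv_one, one_mul, ht1, inv_one, one_mul, mul_one]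

end Wreath

theorem stmt11_aux (p : ℕ) (hp : p.Prime) (G : Type*) [Group G] (H : Subgroup G)
    [H.Normal] [IsFreeGroup H] (hindex : ∃ n : ℕ, H.index = p ^ n) :
    ResiduallyPFinite p G := by
  intro g hg
  by_cases hmem : g ∈ H
  · exact wreath_step H hp hindex (resP_isFreeGroup hp H) hg hmem
  · obtain ⟨n, hidx⟩ := hindex
    haveI : Fact p.Prime := ⟨hp⟩
    haveI fQ : Fintype (G ⧸ H) := H.fintypeOfIndexNeZero (by
      rw [hidx]; exact pow_ne_zero n hp.pos.ne')
    have hQp : IsPGroup p (G ⧸ H) := IsPGroup.of_card (n := n) (by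
      rw [← Subgroup.index_eq_card, hidx])
    refine exists_shrink hQp (QuotientGroup.mk' H) ?_
    intro h1
    exact hmem ((QuotientGroup.eq_one_iff g).mp h1)


end RPAux

theorem stmt11 (p : ℕ) (hp : p.Prime) (G : Type*) [Group G] (H : Subgroup G)
    [H.Normal] [IsFreeGroup H] (hindex : ∃ n : ℕ, H.index = p ^ n) :
    ResiduallyPFinite p G :=
  RPAux.stmt11_aux p hp G H hindex
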